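/- Let T > 0, let E ⊆ [0,T] be Lebesgue measurable with m(E) > 0, let r > 0, and let (a_i) be a finitely supported family of real numbers with a_i = 0 whenever λ_i > r. Define φ(t) = ∑_i a_i·exp(−λ_i (T−t))·X_i for t ∈ [0,T]. Then ‖φ(0)‖² ≤ (C₁·exp(C₂·√r) / m(E)²)·(∫₀^T χ_E(t)·‖B(φ(t))‖ dt)². (Observability inequality over the measurable time set E for backward heat solutions with spectrum below r.) -/

import Mathlib

open MeasureTheory
open scoped RealInnerProductSpace

lemma norm_sq_sum_orthonormal {H : Type*} [NormedAddCommGroup H] [InnerProductSpace ℝ H]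
    {v : ℕ → H} (hv : Orthonormal ℝ v) (l : ℕ → ℝ) (s : Finset ℕ) :
    ‖∑ i ∈ s, l i • v i‖ ^ 2 = ∑ i ∈ s, (l i) ^ 2 := by
  rw [← real_inner_self_eq_norm_sq, hv.inner_sum l l s]
  simp [sq]

/-- Observability inequality over a measurable time set E for backward heat
solutions with spectrum below r (inequality (2.3)). -/
theorem observability_measurable_time_set
    {H : Type*} [NormedAddCommGroup H] [InnerProductSpace ℝ H] [CompleteSpace H]
    (X : HilbertBasis ℕ ℝ H) (lam : ℕ → ℝ)
    (hlam_pos : ∀ i, 0 < lam i) (hlam_mono : Monotone lam)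
    (hlam_tendsto : Filter.Tendsto lam Filter.atTop Filter.atTop)
    (B : H →L[ℝ] H) (hB : ∀ x, ‖B x‖ ≤ ‖x‖)
    (C₁ C₂ : ℝ) (hC₁ : 1 ≤ C₁) (hC₂ : 0 < C₂)
    (hLZ : ∀ r : ℝ, 0 < r → ∀ a : ℕ →₀ ℝ, (∀ i, r < lam i → a i = 0) →
      ∑ i ∈ a.support, (a i) ^ 2 ≤
        C₁ * Real.exp (C₂ * Real.sqrt r) * ‖B (∑ i ∈ a.support, a i • X i)‖ ^ 2)
    (T : ℝ) (hT : 0 < T) (E : Set ℝ) (hE_meas : MeasurableSet E)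
    (hE_sub : E ⊆ Set.Icc 0 T) (hE_pos : 0 < volume E)
    (r : ℝ) (hr : 0 < r) (a : ℕ →₀ ℝ) (ha : ∀ i, r < lam i → a i = 0)
    (φ : ℝ → H)
    (hφ : ∀ t, φ t = ∑ i ∈ a.support, (a i * Real.exp (-(lam i) * (T - t))) • X i) :
    ‖φ 0‖ ^ 2 ≤ (C₁ * Real.exp (C₂ * Real.sqrt r) / (volume E).toReal ^ 2) *
      (∫ t in Set.Ioc (0 : ℝ) T,
          (Set.indicator E (fun _ => (1 : ℝ)) t) * ‖B (φ t)‖) ^ 2 := by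
  set K2 : ℝ := C₁ * Real.exp (C₂ * Real.sqrt r) with hK2
  have hK2_pos : 0 < K2 := by positivity
  -- pointwise spectral bound
  have key : ∀ t ∈ Set.Icc (0:ℝ) T, ‖φ 0‖ ^ 2 ≤ K2 * ‖B (φ t)‖ ^ 2 := by
    intro t ht
    set b : ℕ →₀ ℝ := Finsupp.onFinset a.support
      (fun i => a i * Real.exp (-(lam i) * (T - t)))
      (fun i h => Finsupp.mem_support_iff.2 (fun h0 => h (by simp [h0]))) with hbdef
    have hbapp : ∀ i, b i = a i * Real.exp (-(lam i) * (T - t)) := fun i => rfl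
    have hbsupp : b.support = a.support := by
      ext i
      simp [Finsupp.mem_support_iff, hbapp, Real.exp_ne_zero]
    have hb0 : ∀ i, r < lam i → b i = 0 := fun i h => by simp [hbapp, ha i h]
    have hsum := hLZ r hr b hb0
    rw [hbsupp] at hsum
    have hφt : (∑ i ∈ a.support, b i • X i) = φ t := by
      rw [hφ t]
      exact Finset.sum_congr rfl (fun i _ => by rw [hbapp])
    rw [hφt] at hsum
    have hnorm0 : ‖φ 0‖ ^ 2 = ∑ i ∈ a.support,
        (a i * Real.exp (-(lam i) * (T - 0))) ^ 2 := by
      rw [hφ 0]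
      exact norm_sq_sum_orthonormal X.orthonormal _ _
    have hmono : ∑ i ∈ a.support, (a i * Real.exp (-(lam i) * (T - 0))) ^ 2 ≤
        ∑ i ∈ a.support, (b i) ^ 2 := by
      apply Finset.sum_le_sum
      intro i _
      rw [hbapp, mul_pow, mul_pow]
      have : Real.exp (-(lam i) * (T - 0)) ≤ Real.exp (-(lam i) * (T - t)) := by
        apply Real.exp_le_exp.2
        nlinarith [hlam_pos i, ht.1]
      exact mul_le_mul_of_nonneg_left
        (pow_le_pow_left₀ (Real.exp_nonneg _) this 2) (sq_nonneg (a i))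
    calc ‖φ 0‖ ^ 2 ≤ ∑ i ∈ a.support, (b i) ^ 2 := by rw [hnorm0]; exact hmono
      _ ≤ K2 * ‖B (φ t)‖ ^ 2 := hsum
  -- continuity of t ↦ ‖B (φ t)‖
  have hφcont : Continuous φ := by
    have : Continuous fun t => ∑ i ∈ a.support,
        (a i * Real.exp (-(lam i) * (T - t))) • X i := by
      apply continuous_finset_sum
      intro i _
      exact ((continuous_const.mul ((Real.continuous_exp.comp
        (continuous_const.mul (continuous_const.sub continuous_id))))).smul continuous_const)
    exact this.congr (fun t => (hφ t).symm)
  have hgcont : Continuous fun t => ‖B (φ t)‖ := (B.continuous.comp hφcont).norm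
  -- rewrite integrand as indicator of E of g
  have hindrw : (fun t => (Set.indicator E (fun _ => (1:ℝ)) t) * ‖B (φ t)‖) =
      Set.indicator E (fun t => ‖B (φ t)‖) := by
    funext t
    by_cases h : t ∈ E <;> simp [Set.indicator_of_mem, Set.indicator_of_notMem, h]
  set S : Set ℝ := E ∩ Set.Ioc 0 T with hS
  have hSmeas : MeasurableSet S := hE_meas.inter measurableSet_Ioc
  have hSvol : volume S = volume E := by
    apply le_antisymm (measure_mono Set.inter_subset_left)
    have hEsub : E ⊆ S ∪ {0} := by
      intro x hx
      rcases hE_sub hx with ⟨h0, h1⟩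
      rcases eq_or_lt_of_le h0 with h | h
      · exact Or.inr (by simp [← h])
      · exact Or.inl ⟨hx, h, h1⟩
    calc volume E ≤ volume (S ∪ {0}) := measure_mono hEsub
      _ ≤ volume S + volume ({0} : Set ℝ) := measure_union_le _ _
      _ = volume S := by simp
  have hSfin : volume S ≠ ⊤ := by
    rw [hSvol]
    exact ((measure_mono hE_sub).trans_lt (by simp [Real.volume_Icc])).ne
  have hIint : ∫ t in Set.Ioc (0:ℝ) T,
      (Set.indicator E (fun _ => (1:ℝ)) t) * ‖B (φ t)‖ = ∫ t in S, ‖B (φ t)‖ := by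
    rw [hindrw, ← integral_indicator hSmeas, ← integral_indicator measurableSet_Ioc]
    congr 1
    funext t
    by_cases h1 : t ∈ E <;> by_cases h2 : t ∈ Set.Ioc (0:ℝ) T <;>
      simp [Set.indicator, hS, h1, h2]
  set c : ℝ := ‖φ 0‖ / Real.sqrt K2 with hc
  have hsqrt_pos : 0 < Real.sqrt K2 := Real.sqrt_pos.2 hK2_pos
  have hlower : ∀ t ∈ S, c ≤ ‖B (φ t)‖ := by
    intro t htS
    have ht : t ∈ Set.Icc (0:ℝ) T := hE_sub htS.1
    have := key t ht
    rw [hc, div_le_iff₀ hsqrt_pos]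
    nlinarith [norm_nonneg (φ 0), norm_nonneg (B (φ t)),
      Real.sq_sqrt hK2_pos.le, Real.sqrt_nonneg K2,
      mul_nonneg (Real.sqrt_nonneg K2) (norm_nonneg (B (φ t)))]
  have hint : IntegrableOn (fun t => ‖B (φ t)‖) S volume := by
    apply (hgcont.integrableOn_Icc (a := (0:ℝ)) (b := T)).mono_set
    exact fun x hx => hE_sub hx.1
  have hge := setIntegral_ge_of_const_le hSmeas hSfin hlower hint
  rw [hIint]
  have hME : 0 < (volume E).toReal := by
    apply ENNReal.toReal_pos hE_pos.ne'
    rw [← hSvol]; exact hSfin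
  rw [measureReal_def, hSvol, smul_eq_mul, mul_comm] at hge
  -- now: c * M ≤ I, conclude
  set I : ℝ := ∫ t in S, ‖B (φ t)‖ with hI
  have hInn : 0 ≤ I := setIntegral_nonneg hSmeas (fun t _ => norm_nonneg _)
  have hcM : c * (volume E).toReal ≤ I := hge
  have hcnn : 0 ≤ c := div_nonneg (norm_nonneg _) hsqrt_pos.le
  have hsq : (c * (volume E).toReal) ^ 2 ≤ I ^ 2 := by
    apply sq_le_sq' _ hcM
    nlinarith [mul_nonneg hcnn hME.le]
  have hc2 : c ^ 2 = ‖φ 0‖ ^ 2 / K2 := by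
    rw [hc, div_pow, Real.sq_sqrt hK2_pos.le]
  rw [mul_pow, hc2] at hsq
  rw [div_mul_eq_mul_div, le_div_iff₀ (by positivity)]
  calc ‖φ 0‖ ^ 2 * (volume E).toReal ^ 2
      = (‖φ 0‖ ^ 2 / K2 * (volume E).toReal ^ 2) * K2 := by
        field_simp
    _ ≤ I ^ 2 * K2 := by
        apply mul_le_mul_of_nonneg_right hsq hK2_pos.le
    _ = K2 * I ^ 2 := mul_comm _ _
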